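/- Let n ≥ 1 and let ψ ∈ ℂⁿ have all entries nonzero. For θ = (θ₁, …, θₙ) ∈ ℝⁿ let ψ_θ ∈ ℂⁿ be the vector with entries (ψ_θ)_k = e^{iθ_k} ψ_k. Then the linear span in ℂⁿ ⊗ ℂⁿ of the set { ψ_θ ⊗ conj(ψ_θ) : θ ∈ ℝⁿ } has dimension n² − n + 1; explicitly, it equals span{ e_k ⊗ e_l : k ≠ l } ⊕ ℂ·(Σ_k |ψ_k|² e_k ⊗ e_k). -/

import Mathlib

open BigOperators
open Complex Submodule

open Complex

lemma exp_pi2 (j : ℕ) : Complex.exp ((Real.pi/2 * j : ℝ) * I) = I ^ j := by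
  have : ((Real.pi/2 * j : ℝ) : ℂ) * I = j * ((Real.pi/2 : ℝ) * I) := by push_cast; ring
  rw [this, Complex.exp_nat_mul, Complex.exp_mul_I]
  norm_num

lemma I2 : (I:ℂ)^2 = -1 := Complex.I_sq
lemma I3 : (I:ℂ)^3 = -I := by rw [pow_succ, I2]; ring
lemma I4 : (I:ℂ)^4 = 1 := by rw [pow_succ, I3]; simp [Complex.I_mul_I]
lemma I5 : (I:ℂ)^5 = I := by rw [pow_succ, I4]; ring
lemma I6 : (I:ℂ)^6 = -1 := by rw [pow_succ, I5]; exact Complex.I_mul_I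
lemma I7 : (I:ℂ)^7 = -I := by rw [pow_succ, I6]; ring
lemma I8 : (I:ℂ)^8 = 1 := by rw [pow_succ, I7]; simp [Complex.I_mul_I]
lemma I9 : (I:ℂ)^9 = I := by rw [pow_succ, I8]; ring
lemma I10 : (I:ℂ)^10 = -1 := by rw [pow_succ, I9]; exact Complex.I_mul_I
lemma I11 : (I:ℂ)^11 = -I := by rw [pow_succ, I10]; ring
lemma I12 : (I:ℂ)^12 = 1 := by rw [pow_succ, I11]; simp [Complex.I_mul_I]

set_option maxHeartbeats 2000000 in
lemma aux_single (n : ℕ) (ψ : Fin n → ℂ) (hψ : ∀ k, ψ k ≠ 0)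
    (v : (Fin n → ℝ) → (Fin n × Fin n → ℂ))
    (hv : ∀ θ, v θ = fun p =>
      (Complex.exp (θ p.1 * Complex.I) * ψ p.1) *
        star (Complex.exp (θ p.2 * Complex.I) * ψ p.2))
    (k l : Fin n) (hkl : k ≠ l) :
    Pi.single (k, l) (1 : ℂ) ∈ Submodule.span ℂ (Set.range v) := by
  set j : ℕ → ℕ → Fin n → ℕ := fun m m' a =>
    (if a = k then m else 0) + (if a = l then m' else 0) with hj
  set θ : ℕ → ℕ → Fin n → ℝ := fun m m' a => Real.pi/2 * (j m m' a : ℝ) with hθ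
  have hexp : ∀ m m' a, Complex.exp ((θ m m' a : ℝ) * I) = I ^ (j m m' a) := by
    intro m m' a; rw [hθ]; exact exp_pi2 _
  have key : Pi.single (k, l) (1 : ℂ) = ∑ m ∈ Finset.range 4, ∑ m' ∈ Finset.range 4,
      (((ψ k * star (ψ l))⁻¹ / 16) * (-I) ^ m * I ^ m') • v (θ m m') := by
    funext p
    obtain ⟨a, b⟩ := p
    have hterm : ∀ m m', v (θ m m') (a, b)
        = I ^ (j m m' a) * (-I) ^ (j m m' b) * (ψ a * star (ψ b)) := by
      intro m m'
      rw [hv]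
      simp only [star_mul', hexp, star_pow, Complex.star_def, Complex.conj_I]
      ring
    have hps : (Pi.single (k, l) (1:ℂ) : Fin n × Fin n → ℂ) (a, b) =
        if a = k ∧ b = l then 1 else 0 := by
      rw [Pi.single_apply]
      congr 1
      simp [Prod.ext_iff]
    rw [hps]
    simp only [Finset.sum_apply, Pi.smul_apply, hterm, smul_eq_mul, hj]
    have h1 : ψ k ≠ 0 := hψ k
    have h2 : star (ψ l) ≠ 0 := star_ne_zero.2 (hψ l)
    by_cases hak : a = k
    · have hal : ¬ a = l := by rw [hak]; exact hkl
      by_cases hbl : b = l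
      · have hbk : ¬ b = k := by rw [hbl]; exact hkl.symm
        rw [if_pos ⟨hak, hbl⟩]
        simp only [if_pos hak, if_neg hal, if_neg hbk, if_pos hbl, Finset.sum_range_succ, Finset.sum_range_zero]
        ring_nf
        simp only [I2, I3, I4, I5, I6, I7, I8, I9, I10, I11, I12]
        ring_nf
        field_simp
        rw [hak, hbl]
      · rw [if_neg (fun h => hbl h.2)]
        by_cases hbk : b = k
        · simp only [if_pos hak, if_neg hal, if_pos hbk, if_neg hbl, Finset.sum_range_succ, Finset.sum_range_zero]
          ring_nf
          simp only [I2, I3, I4, I5, I6, I7, I8, I9, I10, I11, I12]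
          ring
        · simp only [if_pos hak, if_neg hal, if_neg hbk, if_neg hbl, Finset.sum_range_succ, Finset.sum_range_zero]
          ring_nf
          simp only [I2, I3, I4, I5, I6, I7, I8, I9, I10, I11, I12]
          ring
    · rw [if_neg (fun h => hak h.1)]
      by_cases hal : a = l
      · by_cases hbk : b = k
        · have hbl : ¬ b = l := by rw [hbk]; exact hkl
          simp only [if_neg hak, if_pos hal, if_pos hbk, if_neg hbl, Finset.sum_range_succ, Finset.sum_range_zero]
          ring_nf
          simp only [I2, I3, I4, I5, I6, I7, I8, I9, I10, I11, I12]
          ring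
        · by_cases hbl : b = l
          · simp only [if_neg hak, if_pos hal, if_neg hbk, if_pos hbl, Finset.sum_range_succ, Finset.sum_range_zero]
            ring_nf
            simp only [I2, I3, I4, I5, I6, I7, I8, I9, I10, I11, I12]
            ring
          · simp only [if_neg hak, if_pos hal, if_neg hbk, if_neg hbl, Finset.sum_range_succ, Finset.sum_range_zero]
            ring_nf
            simp only [I2, I3, I4, I5, I6, I7, I8, I9, I10, I11, I12]
            ring
      · by_cases hbk : b = k
        · have hbl : ¬ b = l := by rw [hbk]; exact hkl
          simp only [if_neg hak, if_neg hal, if_pos hbk, if_neg hbl, Finset.sum_range_succ, Finset.sum_range_zero]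
          ring_nf
          simp only [I2, I3, I4, I5, I6, I7, I8, I9, I10, I11, I12]
          ring
        · by_cases hbl : b = l
          · simp only [if_neg hak, if_neg hal, if_neg hbk, if_pos hbl, Finset.sum_range_succ, Finset.sum_range_zero]
            ring_nf
            simp only [I2, I3, I4, I5, I6, I7, I8, I9, I10, I11, I12]
            ring
          · simp only [if_neg hak, if_neg hal, if_neg hbk, if_neg hbl, Finset.sum_range_succ, Finset.sum_range_zero]
            ring_nf
            simp only [I2, I3, I4, I5, I6, I7, I8, I9, I10, I11, I12]
            ring
  rw [key]
  exact Submodule.sum_mem _ fun m _ => Submodule.sum_mem _ fun m' _ =>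
    Submodule.smul_mem _ _ (Submodule.subset_span ⟨_, rfl⟩)


/-- For `ψ ∈ ℂⁿ` with all entries nonzero, the span in `ℂⁿ ⊗ ℂⁿ` (realized as
`Fin n × Fin n → ℂ` via `x ⊗ y = {(k,l) ↦ x k * y l}`) of the vectors
`ψ_θ ⊗ conj(ψ_θ)` over all phase vectors `θ ∈ ℝⁿ` equals
`span{e_k ⊗ e_l : k ≠ l} ⊕ ℂ·(∑ k |ψ_k|² e_k ⊗ e_k)` and has dimension `n² - n + 1`. -/
theorem span_random_phases (n : ℕ) (hn : 1 ≤ n) (ψ : Fin n → ℂ)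
    (hψ : ∀ k, ψ k ≠ 0)
    (v : (Fin n → ℝ) → (Fin n × Fin n → ℂ))
    (hv : ∀ θ, v θ = fun p =>
      (Complex.exp (θ p.1 * Complex.I) * ψ p.1) *
        star (Complex.exp (θ p.2 * Complex.I) * ψ p.2))
    (D : Fin n × Fin n → ℂ)
    (hD : D = fun p => if p.1 = p.2 then ((‖ψ p.1‖ ^ 2 : ℝ) : ℂ) else 0) :
    Submodule.span ℂ (Set.range v) =
        Submodule.span ℂ
          {u : Fin n × Fin n → ℂ | ∃ k l : Fin n, k ≠ l ∧ u = Pi.single (k, l) (1 : ℂ)}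
          ⊔ (ℂ ∙ D) ∧
      Module.finrank ℂ (Submodule.span ℂ (Set.range v)) = n ^ 2 - n + 1 := by
  have hsingle : ∀ k l : Fin n, k ≠ l →
      Pi.single (k, l) (1 : ℂ) ∈ Submodule.span ℂ (Set.range v) :=
    fun k l h => aux_single n ψ hψ v hv k l h
  set S₀ : Set (Fin n × Fin n → ℂ) :=
    {u : Fin n × Fin n → ℂ | ∃ k l : Fin n, k ≠ l ∧ u = Pi.single (k, l) (1 : ℂ)} with hS₀
  classical
  set F : Finset (Fin n × Fin n) := Finset.univ.filter (fun p => p.1 ≠ p.2) with hF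
  have hsingle' : ∀ p ∈ F, (Pi.single p (1:ℂ) : Fin n × Fin n → ℂ)
      ∈ Submodule.span ℂ (Set.range v) := by
    intro p hp
    have hne : p.1 ≠ p.2 := (Finset.mem_filter.1 hp).2
    have := hsingle p.1 p.2 hne
    rwa [Prod.mk.eta] at this
  have hS₀mem : ∀ p ∈ F, (Pi.single p (1:ℂ) : Fin n × Fin n → ℂ) ∈ S₀ := by
    intro p hp
    exact ⟨p.1, p.2, (Finset.mem_filter.1 hp).2, by rw [Prod.mk.eta]⟩
  have hsum_apply : ∀ (c : Fin n × Fin n → ℂ) (q : Fin n × Fin n),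
      (∑ p ∈ F, c p • (Pi.single p (1:ℂ) : Fin n × Fin n → ℂ)) q
        = if q ∈ F then c q else 0 := by
    intro c q
    rw [Finset.sum_apply]
    simp only [Pi.smul_apply, Pi.single_apply, smul_eq_mul, mul_ite, mul_one, mul_zero]
    rw [Finset.sum_ite_eq]
  have habs : ∀ z : ℂ, z * star z = ((‖z‖ ^ 2 : ℝ) : ℂ) := by
    intro z
    rw [Complex.star_def, Complex.mul_conj]
    norm_cast
    rw [Complex.sq_norm]
  have hvD : ∀ θ, v θ = D + ∑ p ∈ F, (v θ p) • (Pi.single p (1:ℂ) : Fin n × Fin n → ℂ) := by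
    intro θ
    funext q
    obtain ⟨a, b⟩ := q
    rw [Pi.add_apply, hsum_apply]
    by_cases hab : a = b
    · subst hab
      rw [if_neg (by simp [hF]), add_zero]
      have hDa : D (a, a) = ((‖ψ a‖ ^ 2 : ℝ) : ℂ) := by rw [hD]; simp
      have hva : v θ (a, a) = ((‖ψ a‖ ^ 2 : ℝ) : ℂ) := by
        rw [hv]
        show Complex.exp _ * ψ a * star (Complex.exp _ * ψ a) = _
        rw [habs]
        norm_cast
        rw [norm_mul, Complex.norm_exp_ofReal_mul_I, one_mul]
      rw [hDa, hva]
    · rw [if_pos (by simp [hF, hab]), hD]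
      simp only [if_neg hab, zero_add]
  have hDmem : D ∈ Submodule.span ℂ (Set.range v) := by
    have h0 : D = v (fun _ => 0) - ∑ p ∈ F, (v (fun _ => 0) p) • (Pi.single p (1:ℂ) : Fin n × Fin n → ℂ) :=
      eq_sub_of_add_eq (hvD (fun _ => 0)).symm
    rw [h0]
    exact sub_mem (Submodule.subset_span ⟨_, rfl⟩)
      (Submodule.sum_mem _ fun p hp => Submodule.smul_mem _ _ (hsingle' p hp))
  have hspan : Submodule.span ℂ (Set.range v) = Submodule.span ℂ S₀ ⊔ (ℂ ∙ D) := by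
    apply le_antisymm
    · rw [Submodule.span_le]
      rintro _ ⟨θ, rfl⟩
      rw [hvD θ]
      exact add_mem (Submodule.mem_sup_right (Submodule.mem_span_singleton_self D))
        (Submodule.sum_mem _ fun p hp => Submodule.smul_mem _ _
          (Submodule.mem_sup_left (Submodule.subset_span (hS₀mem p hp))))
    · apply sup_le
      · rw [Submodule.span_le]
        rintro u ⟨k, l, hkl, rfl⟩
        exact hsingle k l hkl
      · rw [Submodule.span_singleton_le_iff_mem]
        exact hDmem
  refine ⟨hspan, ?_⟩
  rw [hspan]
  set w : ({p : Fin n × Fin n // p.1 ≠ p.2} ⊕ Unit) → (Fin n × Fin n → ℂ) :=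
    Sum.elim (fun p => Pi.single p.val (1:ℂ)) (fun _ => D) with hw
  have hw_range : Set.range w = S₀ ∪ {D} := by
    ext u
    constructor
    · rintro ⟨i, rfl⟩
      cases i with
      | inl p => exact Or.inl ⟨p.val.1, p.val.2, p.prop, by rw [Prod.mk.eta]; simp [hw]⟩
      | inr _ => exact Or.inr rfl
    · rintro (⟨k, l, hkl, rfl⟩ | h)
      · exact ⟨Sum.inl ⟨(k, l), hkl⟩, by simp [hw]⟩
      · rw [Set.mem_singleton_iff] at h
        exact ⟨Sum.inr (), h.symm⟩
  have hw_span : Submodule.span ℂ (Set.range w) = Submodule.span ℂ S₀ ⊔ (ℂ ∙ D) := by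
    rw [hw_range, Submodule.span_union]
  set k0 : Fin n := ⟨0, hn⟩ with hk0
  have hDk0 : D (k0, k0) ≠ 0 := by
    rw [hD]
    simp [hψ k0]
  have hw_li : LinearIndependent ℂ w := by
    rw [Fintype.linearIndependent_iff]
    intro g hg
    have hval : ∀ q : Fin n × Fin n,
        (∑ p : {p : Fin n × Fin n // p.1 ≠ p.2}, g (Sum.inl p) * (if q = p.val then 1 else 0))
          + g (Sum.inr ()) * D q = 0 := by
      intro q
      have := congrFun hg q
      rw [Fintype.sum_sum_type] at this
      simp only [Finset.sum_apply, Pi.add_apply, Pi.smul_apply, smul_eq_mul,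
        Pi.zero_apply, Fintype.univ_punit, Finset.sum_singleton, hw, Sum.elim_inl,
        Sum.elim_inr, Pi.single_apply] at this
      exact this
    have hinr : g (Sum.inr ()) = 0 := by
      have h0 := hval (k0, k0)
      rw [Finset.sum_eq_zero (fun p _ => by
        rw [if_neg (fun h : (k0, k0) = p.val => p.prop (by rw [← h]))]
        ring), zero_add] at h0
      exact (mul_eq_zero.1 h0).resolve_right hDk0
    intro i
    cases i with
    | inl p =>
      have h0 := hval p.val
      rw [hinr, zero_mul, add_zero] at h0
      rw [Finset.sum_eq_single p (fun q _ hqp => by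
        rw [if_neg (fun h : p.val = q.val => hqp (Subtype.ext h.symm)), mul_zero])
        (fun h => absurd (Finset.mem_univ p) h)] at h0
      rw [if_pos rfl, mul_one] at h0
      exact h0
    | inr u =>
      cases u
      exact hinr
  have hcard : Fintype.card ({p : Fin n × Fin n // p.1 ≠ p.2} ⊕ Unit) = n ^ 2 - n + 1 := by
    rw [Fintype.card_sum, Fintype.card_unit]
    congr 1
    have e : {p : Fin n × Fin n // p.1 = p.2} ≃ Fin n :=
      { toFun := fun x => x.val.1
        invFun := fun k => ⟨(k, k), rfl⟩
        left_inv := fun x => by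
          rcases x with ⟨⟨a, b⟩, h⟩
          cases h
          rfl
        right_inv := fun k => rfl }
    have : Fintype.card {p : Fin n × Fin n // ¬ p.1 = p.2}
        = Fintype.card (Fin n × Fin n) - Fintype.card {p : Fin n × Fin n // p.1 = p.2} :=
      Fintype.card_subtype_compl _
    rw [this, Fintype.card_congr e, Fintype.card_prod, Fintype.card_fin, sq]
  rw [← hw_span, finrank_span_eq_card hw_li, hcard]
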